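/- Let p₀, p₁ be nonnegative reals with p₀ + p₁ = 1, let ρ = !![p₀, 0; 0, p₁], and let Ψ be the vector indexed by Fin 2 × Fin 2 with Ψ(0,0) = √p₀, Ψ(1,1) = √p₁ and 0 otherwise. Then for every vector Ψ' indexed by Fin 2 × Fin 2 satisfying ptr₂(Ψ'Ψ'ᴴ) = ρ, there exists a 2×2 unitary matrix U such that Ψ' = (1₂ ⊗ₖ U) *ᵥ Ψ. That is, every purification of a qubit state with a single purifying qubit is obtained from the canonical purification by a reversible transformation on the purifying system. -/

import Mathlib

open Matrix
open scoped Kronecker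

noncomputable section

/-- Partial trace over the second tensor factor. -/
def ptr2 {m n : ℕ} (X : Matrix (Fin m × Fin n) (Fin m × Fin n) ℂ) :
    Matrix (Fin m) (Fin m) ℂ :=
  Matrix.of fun i j => ∑ k : Fin n, X (i, k) (j, k)

/-- outer product `v vᴴ` of a complex vector with itself. -/
def outerC {α : Type*} (v : α → ℂ) : Matrix α α ℂ :=
  Matrix.of fun a b => v a * star (v b)

/-- The canonical purification `√p₀ e₀⊗e₀ + √p₁ e₁⊗e₁`. -/
def Psi (p₀ p₁ : ℝ) : Fin 2 × Fin 2 → ℂ := fun p =>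
  if p = (0, 0) then (Real.sqrt p₀ : ℂ)
  else if p = (1, 1) then (Real.sqrt p₁ : ℂ) else 0

/-- Auxiliary: entrywise description of `(1 ⊗ₖ U) *ᵥ Psi p₀ p₁`. -/
lemma vecEq_aux (p₀ p₁ : ℝ) (Ψ' : Fin 2 × Fin 2 → ℂ) (U : Matrix (Fin 2) (Fin 2) ℂ)
    (h : ∀ i k : Fin 2,
      Ψ' (i, k) = U k i * (if i = 0 then (Real.sqrt p₀ : ℂ) else (Real.sqrt p₁ : ℂ))) :
    Ψ' = ((1 : Matrix (Fin 2) (Fin 2) ℂ) ⊗ₖ U) *ᵥ Psi p₀ p₁ := by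
  funext p
  obtain ⟨i, k⟩ := p
  fin_cases i <;> fin_cases k <;>
    simp [mulVec, dotProduct, Fintype.sum_prod_type, Fin.sum_univ_two, Psi,
      Matrix.one_apply, h, Prod.ext_iff]

/-- Auxiliary: vanishing of a vector with zero norm. -/
lemma vanish_aux (x y : ℂ) (h : x * (starRingEnd ℂ) x + y * (starRingEnd ℂ) y = 0) :
    x = 0 ∧ y = 0 := by
  rw [Complex.mul_conj, Complex.mul_conj] at h
  have h' : Complex.normSq x + Complex.normSq y = 0 := by exact_mod_cast h
  have hx := Complex.normSq_nonneg x
  have hy := Complex.normSq_nonneg y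
  constructor
  · exact Complex.normSq_eq_zero.mp (by linarith)
  · exact Complex.normSq_eq_zero.mp (by linarith)

theorem stmt7 (p₀ p₁ : ℝ) (h0 : 0 ≤ p₀) (h1 : 0 ≤ p₁) (hsum : p₀ + p₁ = 1)
    (Ψ' : Fin 2 × Fin 2 → ℂ)
    (hΨ' : ptr2 (outerC Ψ') = !![(p₀ : ℂ), 0; 0, (p₁ : ℂ)]) :
    ∃ U : Matrix (Fin 2) (Fin 2) ℂ, Uᴴ * U = 1 ∧ U * Uᴴ = 1 ∧
      Ψ' = ((1 : Matrix (Fin 2) (Fin 2) ℂ) ⊗ₖ U) *ᵥ Psi p₀ p₁ := by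
  set a0 := Ψ' (0, 0) with ha0d
  set a1 := Ψ' (0, 1) with ha1d
  set b0 := Ψ' (1, 0) with hb0d
  set b1 := Ψ' (1, 1) with hb1d
  have e00 : a0 * (starRingEnd ℂ) a0 + a1 * (starRingEnd ℂ) a1 = (p₀ : ℂ) := by
    have := congrFun (congrFun hΨ' 0) 0
    simpa [ptr2, outerC, Fin.sum_univ_two, Complex.star_def] using this
  have e01 : a0 * (starRingEnd ℂ) b0 + a1 * (starRingEnd ℂ) b1 = 0 := by
    have := congrFun (congrFun hΨ' 0) 1
    simpa [ptr2, outerC, Fin.sum_univ_two, Complex.star_def] using this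
  have e11 : b0 * (starRingEnd ℂ) b0 + b1 * (starRingEnd ℂ) b1 = (p₁ : ℂ) := by
    have := congrFun (congrFun hΨ' 1) 1
    simpa [ptr2, outerC, Fin.sum_univ_two, Complex.star_def] using this
  rcases h0.eq_or_lt with hp0 | hp0
  · -- case p₀ = 0
    obtain ⟨hA0, hA1⟩ := vanish_aux a0 a1 (by rw [e00, ← hp0]; simp)
    have hp1 : p₁ = 1 := by linarith
    have e : b0 * (starRingEnd ℂ) b0 + b1 * (starRingEnd ℂ) b1 = 1 := by
      rw [e11, hp1]; norm_num
    have e' : (starRingEnd ℂ) b0 * b0 + (starRingEnd ℂ) b1 * b1 = 1 := by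
      have := congrArg (starRingEnd ℂ) e; simpa [mul_comm] using this
    have hU : (!![(starRingEnd ℂ) b1, b0; -((starRingEnd ℂ) b0), b1])ᴴ *
        !![(starRingEnd ℂ) b1, b0; -((starRingEnd ℂ) b0), b1] = 1 := by
      ext i j
      fin_cases i <;> fin_cases j <;>
        simp only [Matrix.conjTranspose_apply, Matrix.mul_apply, Fin.sum_univ_two,
          Matrix.one_apply, Matrix.cons_val', Matrix.cons_val_zero, Matrix.cons_val_one,
          Matrix.head_cons, Matrix.head_fin_const, Matrix.empty_val', Matrix.cons_val_fin_one,
          map_neg, Complex.conj_conj] <;>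
        norm_num <;>
        first
          | linear_combination e
          | linear_combination e'
          | ring
    refine ⟨!![(starRingEnd ℂ) b1, b0; -((starRingEnd ℂ) b0), b1], hU,
      mul_eq_one_comm.mp hU, ?_⟩
    apply vecEq_aux
    intro i k
    fin_cases i <;> fin_cases k <;>
      simp [← hp0, hp1, hA0, hA1,
        (show Ψ' 0 = a0 from rfl), (show Ψ' 1 = b1 from rfl), (show Ψ' (0, 0) = a0 from rfl), (show Ψ' (1, 1) = b1 from rfl),
        (show Ψ' (0, 1) = a1 from rfl), (show Ψ' (1, 0) = b0 from rfl)]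
  · rcases h1.eq_or_lt with hp1 | hp1
    · -- case p₁ = 0
      obtain ⟨hB0, hB1⟩ := vanish_aux b0 b1 (by rw [e11, ← hp1]; simp)
      have hp0' : p₀ = 1 := by linarith
      have e : a0 * (starRingEnd ℂ) a0 + a1 * (starRingEnd ℂ) a1 = 1 := by
        rw [e00, hp0']; norm_num
      have e' : (starRingEnd ℂ) a0 * a0 + (starRingEnd ℂ) a1 * a1 = 1 := by
        have := congrArg (starRingEnd ℂ) e; simpa [mul_comm] using this
      have hU : (!![a0, (starRingEnd ℂ) a1; a1, -((starRingEnd ℂ) a0)])ᴴ *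
          !![a0, (starRingEnd ℂ) a1; a1, -((starRingEnd ℂ) a0)] = 1 := by
        ext i j
        fin_cases i <;> fin_cases j <;>
          simp only [Matrix.conjTranspose_apply, Matrix.mul_apply, Fin.sum_univ_two,
            Matrix.one_apply, Matrix.cons_val', Matrix.cons_val_zero, Matrix.cons_val_one,
            Matrix.head_cons, Matrix.head_fin_const, Matrix.empty_val', Matrix.cons_val_fin_one,
            map_neg, Complex.conj_conj] <;>
          norm_num <;>
          first
            | linear_combination e
            | linear_combination e'
            | ring
      refine ⟨!![a0, (starRingEnd ℂ) a1; a1, -((starRingEnd ℂ) a0)], hU,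
        mul_eq_one_comm.mp hU, ?_⟩
      apply vecEq_aux
      intro i k
      fin_cases i <;> fin_cases k <;>
        simp [← hp1, hp0', hB0, hB1,
          (show Ψ' 0 = a0 from rfl), (show Ψ' 1 = b1 from rfl), (show Ψ' (0, 0) = a0 from rfl), (show Ψ' (1, 1) = b1 from rfl),
        (show Ψ' (0, 1) = a1 from rfl), (show Ψ' (1, 0) = b0 from rfl)]
    · -- case p₀ > 0 and p₁ > 0
      set s0 : ℂ := (Real.sqrt p₀ : ℂ) with hs0d
      set s1 : ℂ := (Real.sqrt p₁ : ℂ) with hs1d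
      have hs0 : s0 ≠ 0 := by
        rw [hs0d]
        exact_mod_cast (Real.sqrt_pos.mpr hp0).ne'
      have hs1 : s1 ≠ 0 := by
        rw [hs1d]
        exact_mod_cast (Real.sqrt_pos.mpr hp1).ne'
      have hst0 : (starRingEnd ℂ) s0 = s0 := by rw [hs0d]; exact Complex.conj_ofReal _
      have hst1 : (starRingEnd ℂ) s1 = s1 := by rw [hs1d]; exact Complex.conj_ofReal _
      have hsq0 : s0 * s0 = (p₀ : ℂ) := by
        rw [hs0d, ← Complex.ofReal_mul, Real.mul_self_sqrt h0]
      have hsq1 : s1 * s1 = (p₁ : ℂ) := by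
        rw [hs1d, ← Complex.ofReal_mul, Real.mul_self_sqrt h1]
      have f00 : a0 * (starRingEnd ℂ) a0 + a1 * (starRingEnd ℂ) a1 = s0 * s0 := by
        rw [e00, hsq0]
      have f11 : b0 * (starRingEnd ℂ) b0 + b1 * (starRingEnd ℂ) b1 = s1 * s1 := by
        rw [e11, hsq1]
      have g00 : (starRingEnd ℂ) a0 * a0 + (starRingEnd ℂ) a1 * a1 = s0 * s0 := by
        have := congrArg (starRingEnd ℂ) f00; simpa [mul_comm, hst0] using this
      have g11 : (starRingEnd ℂ) b0 * b0 + (starRingEnd ℂ) b1 * b1 = s1 * s1 := by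
        have := congrArg (starRingEnd ℂ) f11; simpa [mul_comm, hst1] using this
      have g01 : (starRingEnd ℂ) a0 * b0 + (starRingEnd ℂ) a1 * b1 = 0 := by
        have := congrArg (starRingEnd ℂ) e01; simpa [mul_comm] using this
      have hU : (!![a0 / s0, b0 / s1; a1 / s0, b1 / s1])ᴴ *
          !![a0 / s0, b0 / s1; a1 / s0, b1 / s1] = 1 := by
        ext i j
        fin_cases i <;> fin_cases j <;>
          simp only [Matrix.conjTranspose_apply, Matrix.mul_apply, Fin.sum_univ_two,
            Matrix.one_apply, Matrix.cons_val', Matrix.cons_val_zero, Matrix.cons_val_one,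
            Matrix.head_cons, Matrix.head_fin_const, Matrix.empty_val', Matrix.cons_val_fin_one,
            map_div₀] <;>
          norm_num <;>
          simp only [hst0, hst1] <;>
          field_simp
        · linear_combination g00
        · linear_combination g01
        · linear_combination e01
        · linear_combination g11
      refine ⟨!![a0 / s0, b0 / s1; a1 / s0, b1 / s1], hU,
        mul_eq_one_comm.mp hU, ?_⟩
      apply vecEq_aux
      intro i k
      fin_cases i <;> fin_cases k <;>
        simp [div_mul_cancel₀, hs0, hs1,
          (show Ψ' 0 = a0 from rfl), (show Ψ' 1 = b1 from rfl), (show Ψ' (0, 0) = a0 from rfl), (show Ψ' (1, 1) = b1 from rfl),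
        (show Ψ' (0, 1) = a1 from rfl), (show Ψ' (1, 0) = b0 from rfl), ← hs0d, ← hs1d]

end
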